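/- arXiv:1807.04019 — 2 statements merged into one kernel-verified Lean document; each statement's English description precedes it below -/
import Mathlib

section
/- Assume m ≥ 3 and r ≥ 1. Then for P̄-almost every environment ω, P_ω^0[S_n^{(1)} = S_n^{(2)} = S_n^{(3)} = Z_n^{(1)} for infinitely many n] = 0; that is, almost surely the walks S^{(1)}, S^{(2)}, S^{(3)}, Z^{(1)} meet simultaneously only a finite number of times (and a fortiori so do S^{(1)}, ..., S^{(m)}, Z^{(1)}, ..., Z^{(r)}). -/
open MeasureTheory ProbabilityTheory Filter Set
open scoped ENNReal NNReal

noncomputable section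

/-- The quenched joint law of `d` independent nearest-neighbour random walks on `ℤ`,
the `j`-th walk evolving in the environment `es j` and started at `start j`. -/
def IsIndepWalksLaw {d : ℕ} (es : Fin d → ℤ → ℝ) (start : Fin d → ℤ)
    (P : MeasureTheory.Measure (ℕ → Fin d → ℤ)) : Prop :=
  MeasureTheory.IsProbabilityMeasure P ∧
  P {F | F 0 = start} = 1 ∧
  ∀ (n : ℕ) (g : ℕ → Fin d → ℤ) (ξ : Fin d → Bool),
    P {F | (∀ i ≤ n, F i = g i) ∧ F (n + 1) = fun j => g n j + (if ξ j then 1 else -1)}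
      = (∏ j, ENNReal.ofReal (if ξ j then es j (g n j) else 1 - es j (g n j)))
        * P {F | ∀ i ≤ n, F i = g i}

namespace SRWMeetAux

/-- nearest-neighbour transition kernel -/
def p1 (e : ℤ → ℝ) (x y : ℤ) : ℝ≥0∞ :=
  if y = x + 1 then ENNReal.ofReal (e x) else if y = x - 1 then ENNReal.ofReal (1 - e x) else 0

def nu (e : ℤ → ℝ) : ℕ → ℤ → ℝ≥0∞
  | 0, y => if y = 0 then 1 else 0
  | n+1, y => nu e n (y-1) * p1 e (y-1) y + nu e n (y+1) * p1 e (y+1) y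

lemma p1_right (e : ℤ → ℝ) (x : ℤ) : p1 e x (x+1) = ENNReal.ofReal (e x) := by simp [p1]

lemma p1_left (e : ℤ → ℝ) (x : ℤ) : p1 e x (x-1) = ENNReal.ofReal (1 - e x) := by
  rw [p1, if_neg (by omega), if_pos rfl]

lemma p1_eq_zero (e : ℤ → ℝ) {x y : ℤ} (h1 : y ≠ x + 1) (h2 : y ≠ x - 1) : p1 e x y = 0 := by
  rw [p1, if_neg h1, if_neg h2]

lemma p1_add (e : ℤ → ℝ) (x : ℤ) (h0 : 0 ≤ e x) (h1 : e x ≤ 1) :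
    p1 e x (x+1) + p1 e x (x-1) = 1 := by
  rw [p1_right, p1_left, ← ENNReal.ofReal_add h0 (by linarith)]
  simp

lemma tsum_nu_le_one (e : ℤ → ℝ) (he : ∀ x, 0 ≤ e x ∧ e x ≤ 1) (n : ℕ) :
    ∑' y : ℤ, nu e n y ≤ 1 := by
  induction n with
  | zero => simp [nu, tsum_ite_eq]
  | succ n ih =>
      have hs : ∑' y : ℤ, nu e (n+1) y = ∑' x : ℤ, nu e n x := by
        calc ∑' y : ℤ, nu e (n+1) y
            = (∑' y : ℤ, nu e n (y-1) * p1 e (y-1) y)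
              + ∑' y : ℤ, nu e n (y+1) * p1 e (y+1) y := by
              rw [← ENNReal.tsum_add]; rfl
          _ = (∑' x : ℤ, nu e n x * p1 e x (x+1)) + ∑' x : ℤ, nu e n x * p1 e x (x-1) := by
              congr 1
              · rw [← (Equiv.subRight (1:ℤ)).tsum_eq (fun x => nu e n x * p1 e x (x+1))]
                exact tsum_congr fun y => by
                  show nu e n (y-1) * p1 e (y-1) y = nu e n (y-1) * p1 e (y-1) ((y-1)+1)
                  rw [sub_add_cancel]
              · rw [← (Equiv.addRight (1:ℤ)).tsum_eq (fun x => nu e n x * p1 e x (x-1))]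
                exact tsum_congr fun y => by
                  show nu e n (y+1) * p1 e (y+1) y = nu e n (y+1) * p1 e (y+1) ((y+1)-1)
                  rw [add_sub_cancel_right]
          _ = ∑' x : ℤ, nu e n x * (p1 e x (x+1) + p1 e x (x-1)) := by
              rw [← ENNReal.tsum_add]; exact tsum_congr fun x => (mul_add _ _ _).symm
          _ = ∑' x : ℤ, nu e n x := by
              refine tsum_congr fun x => ?_
              rw [p1_add e x (he x).1 (he x).2, mul_one]
      rw [hs]; exact ih

lemma nu_le_one (e : ℤ → ℝ) (he : ∀ x, 0 ≤ e x ∧ e x ≤ 1) (n : ℕ) (y : ℤ) :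
    nu e n y ≤ 1 :=
  le_trans (ENNReal.le_tsum y) (tsum_nu_le_one e he n)

def pc : ℕ → ℤ → ℕ
  | 0, y => if y = 0 then 1 else 0
  | n+1, y => pc n (y-1) + pc n (y+1)

lemma pc_eq_zero : ∀ (n : ℕ) (y : ℤ), (∀ k ≤ n, y ≠ (n:ℤ) - 2*k) → pc n y = 0 := by
  intro n
  induction n with
  | zero => intro y hy; have := hy 0 le_rfl; simp [pc]; omega
  | succ n ih =>
      intro y hy
      have h1 : pc n (y-1) = 0 := ih _ (fun k hk h => hy k (by omega) (by push_cast at h ⊢; omega))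
      have h2 : pc n (y+1) = 0 := ih _ (fun k hk h => hy (k+1) (by omega) (by push_cast at h ⊢; omega))
      simp [pc, h1, h2]

lemma pc_eq_choose : ∀ (n k : ℕ), k ≤ n → pc n ((n:ℤ) - 2*k) = n.choose k := by
  intro n
  induction n with
  | zero => intro k hk; interval_cases k; simp [pc]
  | succ n ih =>
      intro k hk
      match k with
      | 0 =>
          have h2 : pc n (((n:ℕ):ℤ) + 2) = 0 :=
            pc_eq_zero n _ (fun k hk h => by push_cast at h; omega)
          have h1 : ((n+1:ℕ):ℤ) - 2*(0:ℕ) - 1 = (n:ℤ) - 2*(0:ℕ) := by push_cast; ring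
          show pc n (((n+1:ℕ):ℤ) - 2*(0:ℕ) - 1) + pc n (((n+1:ℕ):ℤ) - 2*(0:ℕ) + 1) = _
          rw [h1, ih 0 (by omega)]
          have h3 : ((n+1:ℕ):ℤ) - 2*(0:ℕ) + 1 = ((n:ℕ):ℤ) + 2 := by push_cast; ring
          rw [h3, h2]; simp
      | k+1 =>
          have hkn : k ≤ n := by omega
          have e2 : ((n+1:ℕ):ℤ) - 2*(k+1:ℕ) + 1 = (n:ℤ) - 2*(k:ℕ) := by push_cast; ring
          have hfirst : pc n (((n+1:ℕ):ℤ) - 2*(k+1:ℕ) - 1) = n.choose (k+1) := by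
            by_cases hk1 : k + 1 ≤ n
            · have e1 : ((n+1:ℕ):ℤ) - 2*(k+1:ℕ) - 1 = (n:ℤ) - 2*((k+1:ℕ):ℕ) := by
                push_cast; ring
              rw [e1, ih (k+1) hk1]
            · have hz : pc n (((n+1:ℕ):ℤ) - 2*(k+1:ℕ) - 1) = 0 :=
                pc_eq_zero n _ (fun j hj h => by push_cast at h; omega)
              rw [hz, Nat.choose_eq_zero_of_lt (by omega)]
          show pc n (((n+1:ℕ):ℤ) - 2*(k+1:ℕ) - 1) + pc n (((n+1:ℕ):ℤ) - 2*(k+1:ℕ) + 1) = _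
          rw [hfirst, e2, ih k hkn, Nat.choose_succ_succ (n) (k)]
          simp only [Nat.succ_eq_add_one]
          omega

lemma pc_le_middle (n : ℕ) (y : ℤ) : pc n y ≤ n.choose (n/2) := by
  by_cases h : ∃ k, k ≤ n ∧ y = (n:ℤ) - 2*k
  · obtain ⟨k, hk, rfl⟩ := h
    rw [pc_eq_choose n k hk]; exact Nat.choose_le_middle k n
  · push_neg at h
    rw [pc_eq_zero n y (fun k hk => h k hk)]; exact Nat.zero_le _

lemma centralBinom_sq (n : ℕ) : (Nat.centralBinom n)^2 * (n+1) ≤ 16^n := by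
  induction n with
  | zero => simp [Nat.centralBinom]
  | succ n ih =>
      have key : (n+1) * Nat.centralBinom (n+1) = 2 * (2*n+1) * Nat.centralBinom n :=
        Nat.succ_mul_centralBinom_succ n
      have hpos : 0 < (n+1)^3 := by positivity
      refine Nat.le_of_mul_le_mul_left ?_ hpos
      have expand : (n+1)^3 * ((Nat.centralBinom (n+1))^2 * (n+1+1))
          = (4*(2*n+1)^2*(n+2)) * ((Nat.centralBinom n)^2 * (n+1)) := by
        have : ((n+1) * Nat.centralBinom (n+1))^2 = (2*(2*n+1)*Nat.centralBinom n)^2 := by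
          rw [key]
        ring_nf at this ⊢
        nlinarith [this]
      rw [expand]
      calc (4*(2*n+1)^2*(n+2)) * ((Nat.centralBinom n)^2 * (n+1))
          ≤ (4*(2*n+1)^2*(n+2)) * 16^n := Nat.mul_le_mul_left _ ih
        _ ≤ (16*(n+1)^3) * 16^n := Nat.mul_le_mul_right _ (by nlinarith)
        _ = (n+1)^3 * 16^(n+1) := by ring

lemma choose_half_sq (n : ℕ) : (n.choose (n/2))^2 * (n+2) ≤ 2 * 4^n := by
  rcases Nat.even_or_odd n with ⟨k, hk⟩ | ⟨k, hk⟩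
  · subst hk
    have h2 : (k+k)/2 = k := by omega
    rw [h2]
    have : (k+k).choose k = Nat.centralBinom k := by rw [Nat.centralBinom]; congr 1; omega
    rw [this]
    have := centralBinom_sq k
    calc (Nat.centralBinom k)^2 * (k+k+2) = 2 * ((Nat.centralBinom k)^2 * (k+1)) := by ring
      _ ≤ 2 * 16^k := by omega
      _ ≤ 2 * 4^(k+k) := by rw [← two_mul k, pow_mul]; norm_num
  · subst hk
    have h2 : (2*k+1)/2 = k := by omega
    rw [h2]
    set a := (2*k+1).choose k with ha
    have hcb : Nat.centralBinom (k+1) = 2 * a := by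
      rw [Nat.centralBinom]
      have : 2*(k+1) = (2*k+1) + 1 := by ring
      rw [this, Nat.choose_succ_succ]
      have hsymm : (2*k+1).choose (k+1) = a := by
        rw [ha, ← Nat.choose_symm (by omega : k+1 ≤ 2*k+1)]
        congr 1; omega
      rw [hsymm, ha]; ring
    have hcb2 := centralBinom_sq (k+1)
    rw [hcb] at hcb2
    -- (2a)^2 * (k+2) ≤ 16^(k+1), want a^2 * (2k+3) ≤ 2 * 4^(2k+1)
    have h16 : 16^(k+1) = 16 * 16^k := by ring
    have h4 : (4:ℕ)^(2*k+1) = 4 * 16^k := by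
      rw [pow_succ']; congr 1; rw [pow_mul]; norm_num
    nlinarith [hcb2, sq_nonneg a]

lemma ofReal_half : ENNReal.ofReal (1/2 : ℝ) = 2⁻¹ := by
  rw [ENNReal.ofReal_div_of_pos (by norm_num)]
  norm_num

lemma nus_eq_pc (n : ℕ) (y : ℤ) :
    nu (fun _ => (1:ℝ)/2) n y = (pc n y : ℝ≥0∞) * ((2:ℝ≥0∞)^n)⁻¹ := by
  induction n generalizing y with
  | zero => by_cases h : y = 0 <;> simp [nu, pc, h]
  | succ n ih =>
      have hp1 : p1 (fun _ => (1:ℝ)/2) (y-1) y = 2⁻¹ := by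
        rw [p1, if_pos (by ring : y = (y-1)+1)]; exact ofReal_half
      have hp2 : p1 (fun _ => (1:ℝ)/2) (y+1) y = 2⁻¹ := by
        rw [p1, if_neg (by omega), if_pos (by ring)]
        rw [show (1:ℝ) - 1/2 = 1/2 by norm_num]; exact ofReal_half
      show nu _ n (y-1) * _ + nu _ n (y+1) * _ = _
      rw [hp1, hp2, ih, ih]
      show (pc n (y-1) : ℝ≥0∞) * ((2:ℝ≥0∞)^n)⁻¹ * 2⁻¹ + (pc n (y+1) : ℝ≥0∞) * ((2:ℝ≥0∞)^n)⁻¹ * 2⁻¹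
        = ((pc n (y-1) + pc n (y+1) : ℕ) : ℝ≥0∞) * ((2:ℝ≥0∞)^(n+1))⁻¹
      rw [Nat.cast_add, add_mul, pow_succ, ENNReal.mul_inv (by simp) (by simp)]
      ring

lemma nus_le_mid' (n : ℕ) (y : ℤ) :
    nu (fun _ => (1:ℝ)/2) n y ≤ (n.choose (n/2) : ℝ≥0∞) * ((2:ℝ≥0∞)^n)⁻¹ := by
  rw [nus_eq_pc]
  -- pc n y ≤ choose
  exact mul_le_mul_left (Nat.cast_le.mpr (pc_le_middle n y)) _

def Mn (n : ℕ) : ℝ≥0∞ := (n.choose (n/2) : ℝ≥0∞) * ((2:ℝ≥0∞)^n)⁻¹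

lemma Mn_sq_le (n : ℕ) : Mn n ^ 2 ≤ 2 * ((n:ℝ≥0∞)+2)⁻¹ := by
  have h4 : ((2:ℝ≥0∞)^n)⁻¹ * ((2:ℝ≥0∞)^n)⁻¹ = ((4:ℝ≥0∞)^n)⁻¹ := by
    rw [← ENNReal.mul_inv (by simp) (by simp), ← mul_pow]
    norm_num
  have hMn2 : Mn n ^ 2 = ((n.choose (n/2))^2 : ℕ) * ((4:ℝ≥0∞)^n)⁻¹ := by
    rw [Mn, sq, mul_mul_mul_comm, h4]
    push_cast; ring
  have hcast : (((n.choose (n/2))^2 * (n+2) : ℕ) : ℝ≥0∞) ≤ ((2 * 4^n : ℕ) : ℝ≥0∞) :=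
    Nat.cast_le.mpr (choose_half_sq n)
  have h2 : Mn n ^ 2 * ((n:ℝ≥0∞)+2) ≤ 2 := by
    rw [hMn2]
    calc ((n.choose (n/2))^2 : ℕ) * ((4:ℝ≥0∞)^n)⁻¹ * ((n:ℝ≥0∞)+2)
        = (((n.choose (n/2))^2 * (n+2) : ℕ) : ℝ≥0∞) * ((4:ℝ≥0∞)^n)⁻¹ := by
          push_cast; ring
      _ ≤ ((2 * 4^n : ℕ) : ℝ≥0∞) * ((4:ℝ≥0∞)^n)⁻¹ := by gcongr
      _ = 2 * ((4:ℝ≥0∞)^n * ((4:ℝ≥0∞)^n)⁻¹) := by push_cast; ring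
      _ ≤ 2 * 1 := by gcongr; exact ENNReal.mul_inv_le_one _
      _ = 2 := mul_one 2
  have h0 : ((n:ℝ≥0∞)+2) ≠ 0 := by simp
  have htop : ((n:ℝ≥0∞)+2) ≠ ∞ := by
    simp [ENNReal.add_ne_top]
  calc Mn n ^ 2 ≤ 2 / ((n:ℝ≥0∞)+2) := by
        rwa [ENNReal.le_div_iff_mul_le (Or.inl h0) (Or.inl htop)]
    _ = 2 * ((n:ℝ≥0∞)+2)⁻¹ := by rw [div_eq_mul_inv]

lemma Mn_cubed_le (n : ℕ) :
    Mn n ^ 3 ≤ ((2:ℝ≥0∞) * ((n:ℝ≥0∞)+2)⁻¹) ^ ((3:ℝ)/2) := by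
  have h := Mn_sq_le n
  calc Mn n ^ 3 = (Mn n ^ (2:ℕ)) ^ ((3:ℝ)/2) := by
        rw [← ENNReal.rpow_natCast (Mn n) 2, ← ENNReal.rpow_mul,
          ← ENNReal.rpow_natCast (Mn n) 3]
        norm_num
    _ ≤ _ := ENNReal.rpow_le_rpow h (by norm_num)

lemma summable_aux : Summable (fun n : ℕ => (2/((n:ℝ)+2)) ^ ((3:ℝ)/2)) := by
  have h1 : Summable (fun n : ℕ => ((n:ℝ))^(-((3:ℝ)/2))) :=
    Real.summable_nat_rpow.mpr (by norm_num)
  have h2 : Summable (fun n : ℕ => (((n+2:ℕ):ℝ))^(-((3:ℝ)/2))) :=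
    h1.comp_injective (fun a b h => by omega)
  have h3 : Summable (fun n : ℕ => (2:ℝ)^((3:ℝ)/2) * (((n:ℝ)+2))^(-((3:ℝ)/2))) := by
    refine (h2.mul_left ((2:ℝ)^((3:ℝ)/2))).congr fun n => ?_
    push_cast; ring_nf
  refine h3.congr fun n => ?_
  have hpos : (0:ℝ) < (n:ℝ)+2 := by positivity
  rw [Real.div_rpow (by norm_num) (le_of_lt hpos), Real.rpow_neg (le_of_lt hpos)]
  exact (div_eq_mul_inv _ _).symm

lemma tsum_Mn_cubed : ∑' n, Mn n ^ 3 ≠ ∞ := by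
  refine ne_top_of_le_ne_top ?_ (ENNReal.tsum_le_tsum fun n => Mn_cubed_le n)
  have heq : ∀ n : ℕ, ((2:ℝ≥0∞) * ((n:ℝ≥0∞)+2)⁻¹) ^ ((3:ℝ)/2)
      = ENNReal.ofReal ((2/((n:ℝ)+2)) ^ ((3:ℝ)/2)) := by
    intro n
    have hpos : (0:ℝ) < (n:ℝ)+2 := by positivity
    have hcast : ENNReal.ofReal ((n:ℝ)+2) = (n:ℝ≥0∞)+2 := by
      rw [ENNReal.ofReal_add (by positivity) (by norm_num), ENNReal.ofReal_natCast]
      norm_num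
    have hbase : (2:ℝ≥0∞) * ((n:ℝ≥0∞)+2)⁻¹ = ENNReal.ofReal (2/((n:ℝ)+2)) := by
      rw [div_eq_mul_inv, ENNReal.ofReal_mul (by norm_num : (0:ℝ) ≤ 2),
        ENNReal.ofReal_inv_of_pos hpos, hcast, ENNReal.ofReal_ofNat]
    rw [hbase, ← ENNReal.ofReal_rpow_of_pos (by positivity)]
  calc ∑' n : ℕ, ((2:ℝ≥0∞) * ((n:ℝ≥0∞)+2)⁻¹) ^ ((3:ℝ)/2)
      = ∑' n : ℕ, ENNReal.ofReal ((2/((n:ℝ)+2)) ^ ((3:ℝ)/2)) := tsum_congr heq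
    _ = ENNReal.ofReal (∑' n : ℕ, (2/((n:ℝ)+2)) ^ ((3:ℝ)/2)) :=
        (ENNReal.ofReal_tsum_of_nonneg (fun n : ℕ => by positivity) summable_aux).symm
    _ ≠ ∞ := ENNReal.ofReal_ne_top

variable {d : ℕ}

example : Countable (Fin d → ℤ) := inferInstance
example : MeasurableSingletonClass (Fin d → ℤ) := inferInstance
example (n : ℕ) : Countable (Fin (n+1) → Fin d → ℤ) := inferInstance

def cyl (g : ℕ → Fin d → ℤ) (n : ℕ) : Set (ℕ → Fin d → ℤ) := {F | ∀ i ≤ n, F i = g i}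

lemma measurableSet_cyl (g : ℕ → Fin d → ℤ) (n : ℕ) : MeasurableSet (cyl g n) := by
  have : cyl g n = ⋂ i ∈ Finset.range (n+1), (fun F : ℕ → Fin d → ℤ => F i) ⁻¹' {g i} := by
    ext F; simp [cyl, Nat.lt_succ_iff]
  rw [this]
  exact MeasurableSet.biInter (Finset.range (n+1)).countable_toSet
    (fun i _ => (measurable_pi_apply i) (measurableSet_singleton _))

lemma measurableSet_eval (n : ℕ) (A : Set (Fin d → ℤ)) :
    MeasurableSet {F : ℕ → Fin d → ℤ | F n ∈ A} :=
  (measurable_pi_apply n) (A.to_countable.measurableSet)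

variable (es : Fin d → ℤ → ℝ) {P : Measure (ℕ → Fin d → ℤ)}

/-- one-step decomposition -/
lemma cyl_step (hP : IsIndepWalksLaw es (fun _ => 0) P)
    (hes : ∀ j x, 0 ≤ es j x ∧ es j x ≤ 1)
    (g : ℕ → Fin d → ℤ) (n : ℕ) (v : Fin d → ℤ) :
    P (cyl g n ∩ {F | F (n+1) = v})
      = (∏ j, p1 (es j) (g n j) (v j)) * P (cyl g n) := by
  have hprob : IsProbabilityMeasure P := hP.1
  set stepv : (Fin d → Bool) → (Fin d → ℤ) :=
    fun ξ j => g n j + (if ξ j then 1 else -1) with hstepv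
  have hevent : ∀ ξ : Fin d → Bool,
      {F : ℕ → Fin d → ℤ | (∀ i ≤ n, F i = g i) ∧ F (n + 1) = stepv ξ}
        = cyl g n ∩ {F | F (n+1) = stepv ξ} := fun ξ => rfl
  have hstep : ∀ ξ : Fin d → Bool,
      P (cyl g n ∩ {F | F (n+1) = stepv ξ})
        = (∏ j, ENNReal.ofReal (if ξ j then es j (g n j) else 1 - es j (g n j)))
          * P (cyl g n) := by
    intro ξ
    rw [← hevent ξ]
    exact hP.2.2 n g ξ
  by_cases hnn : ∀ j, v j = g n j + 1 ∨ v j = g n j - 1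
  · set ξ : Fin d → Bool := fun j => decide (v j = g n j + 1) with hξ
    have hv : v = stepv ξ := by
      funext j
      rcases hnn j with h | h
      · simp [hstepv, hξ, h]
      · have hne : ¬ (v j = g n j + 1) := by omega
        simp [hstepv, hξ, hne, h]
        omega
    rw [hv, hstep ξ]
    congr 1
    refine Finset.prod_congr rfl fun j _ => ?_
    by_cases hj : ξ j
    · have : stepv ξ j = g n j + 1 := by simp [hstepv, hj]
      rw [this, p1_right, if_pos hj]
    · have : stepv ξ j = g n j - 1 := by simp [hstepv, hj]; omega
      rw [this, p1_left, if_neg hj]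
  · push_neg at hnn
    obtain ⟨j0, h1, h2⟩ := hnn
    have hrhs : (∏ j, p1 (es j) (g n j) (v j)) = 0 :=
      Finset.prod_eq_zero (Finset.mem_univ j0) (p1_eq_zero _ h1 h2)
    rw [hrhs, zero_mul]
    -- show the measure is zero
    set U : Set (ℕ → Fin d → ℤ) := ⋃ ξ : Fin d → Bool, cyl g n ∩ {F | F (n+1) = stepv ξ}
      with hU
    have hUmeas : ∀ ξ : Fin d → Bool, MeasurableSet (cyl g n ∩ {F | F (n+1) = stepv ξ}) :=
      fun ξ => (measurableSet_cyl g n).inter (measurableSet_eval (n+1) {stepv ξ})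
    have hdisj : Pairwise (Function.onFun Disjoint
        (fun ξ : Fin d → Bool => cyl g n ∩ {F | F (n+1) = stepv ξ})) := by
      intro ξ ξ' hne
      refine Set.disjoint_left.mpr fun F hF hF' => ?_
      have h1' : F (n+1) = stepv ξ := hF.2
      have h2' : F (n+1) = stepv ξ' := hF'.2
      apply hne
      funext j
      have := congrFun (h1'.symm.trans h2') j
      simp only [hstepv] at this
      rcases Bool.eq_false_or_eq_true (ξ j) with h | h <;>
        rcases Bool.eq_false_or_eq_true (ξ' j) with h' | h' <;>
        simp [h, h'] at this ⊢ <;> omega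
    have hPU : P U = P (cyl g n) := by
      rw [hU, measure_iUnion hdisj hUmeas]
      have : ∀ ξ : Fin d → Bool, P (cyl g n ∩ {F | F (n+1) = stepv ξ})
          = (∏ j, ENNReal.ofReal (if ξ j then es j (g n j) else 1 - es j (g n j)))
            * P (cyl g n) := hstep
      rw [tsum_congr this, tsum_eq_sum (s := Finset.univ) (fun b hb => absurd (Finset.mem_univ b) hb),
        ← Finset.sum_mul]
      have hsum1 : ∑ ξ : Fin d → Bool,
          (∏ j, ENNReal.ofReal (if ξ j then es j (g n j) else 1 - es j (g n j))) = 1 := by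
        rw [← Fintype.piFinset_univ, ← Finset.prod_univ_sum
          (fun _ => (Finset.univ : Finset Bool))
          (fun j b => ENNReal.ofReal (if b then es j (g n j) else 1 - es j (g n j)))]
        refine Finset.prod_eq_one fun j _ => ?_
        rw [Fintype.sum_bool, if_pos rfl, if_neg (by simp),
          ← ENNReal.ofReal_add (hes j (g n j)).1 (by linarith [(hes j (g n j)).2])]
        simp
      rw [hsum1, one_mul]
    have hsub : U ⊆ cyl g n := Set.iUnion_subset fun ξ => Set.inter_subset_left
    have hdiff : P (cyl g n \ U) = 0 := by
      rw [measure_diff hsub (MeasurableSet.iUnion hUmeas).nullMeasurableSet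
        (measure_ne_top P U), hPU, tsub_self]
    refine measure_mono_null ?_ hdiff
    intro F hF
    refine ⟨hF.1, fun hFU => ?_⟩
    rw [hU, Set.mem_iUnion] at hFU
    obtain ⟨ξ, hFs⟩ := hFU
    have hv : v = stepv ξ := hF.2.symm.trans hFs.2
    have := congrFun hv j0
    simp only [hstepv] at this
    rcases Bool.eq_false_or_eq_true (ξ j0) with h | h <;> simp [h] at this <;> omega

def restr (n : ℕ) (h : Fin (n+1) → Fin d → ℤ) : ℕ → Fin d → ℤ :=
  fun i => if hi : i < n+1 then h ⟨i, hi⟩ else 0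

lemma mem_cyl_restr {n : ℕ} {h : Fin (n+1) → Fin d → ℤ} {F : ℕ → Fin d → ℤ} :
    F ∈ cyl (restr n h) n ↔ ∀ i : Fin (n+1), F i = h i := by
  constructor
  · intro hF i
    have := hF i (Nat.lt_succ_iff.mp i.isLt)
    rwa [restr, dif_pos i.isLt, Fin.eta] at this
  · intro hF i hi
    have hr : restr n h i = h ⟨i, Nat.lt_succ_of_le hi⟩ := dif_pos (Nat.lt_succ_of_le hi)
    rw [hr]
    exact hF ⟨i, Nat.lt_succ_of_le hi⟩

lemma cyl_restr_disjoint (n : ℕ) :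
    Pairwise (Function.onFun Disjoint
      (fun h : Fin (n+1) → Fin d → ℤ => cyl (restr n h) n)) := by
  intro h h' hne
  refine Set.disjoint_left.mpr fun F hF hF' => hne ?_
  funext i
  exact (mem_cyl_restr.mp hF i).symm.trans (mem_cyl_restr.mp hF' i)

lemma iUnion_cyl_restr (n : ℕ) :
    ⋃ h : Fin (n+1) → Fin d → ℤ, cyl (restr n h) n = Set.univ := by
  refine Set.eq_univ_of_forall fun F => Set.mem_iUnion.mpr ?_
  exact ⟨fun i => F i, mem_cyl_restr.mpr fun i => rfl⟩

variable {es}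

lemma decomp {B : Set (ℕ → Fin d → ℤ)} (hB : MeasurableSet B) (n : ℕ) :
    P B = ∑' h : Fin (n+1) → Fin d → ℤ, P (B ∩ cyl (restr n h) n) := by
  conv_lhs => rw [show B = ⋃ h : Fin (n+1) → Fin d → ℤ, B ∩ cyl (restr n h) n by
    rw [← Set.inter_iUnion, iUnion_cyl_restr, Set.inter_univ]]
  exact measure_iUnion
    (fun a b hab => ((cyl_restr_disjoint n) hab).mono
      Set.inter_subset_right Set.inter_subset_right)
    (fun h => hB.inter (measurableSet_cyl _ _))

lemma fiber_sum (n : ℕ) (w : Fin d → ℤ) :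
    ∑' (h : {h : Fin (n+1) → Fin d → ℤ // h (Fin.last n) = w}), P (cyl (restr n h.1) n)
      = P {F | F n = w} := by
  have hdisj : Pairwise (Function.onFun Disjoint
      (fun h : {h : Fin (n+1) → Fin d → ℤ // h (Fin.last n) = w} => cyl (restr n h.1) n)) :=
    fun a b hab => (cyl_restr_disjoint n) (fun e => hab (Subtype.ext e))
  rw [← measure_iUnion hdisj (fun h => measurableSet_cyl _ _)]
  congr 1
  ext F
  constructor
  · rintro ⟨s, ⟨h, rfl⟩, hFs⟩
    have := mem_cyl_restr.mp hFs (Fin.last n)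
    show F n = w
    rw [← h.2]
    exact this
  · intro hF
    refine Set.mem_iUnion.mpr ⟨⟨fun i => F i, hF⟩, mem_cyl_restr.mpr fun i => rfl⟩

lemma measurableSet_eval' (n : ℕ) (v : Fin d → ℤ) :
    MeasurableSet {F : ℕ → Fin d → ℤ | F n = v} := by
  have : {F : ℕ → Fin d → ℤ | F n = v} = (fun F : ℕ → Fin d → ℤ => F n) ⁻¹' {v} := by
    ext F; simp
  rw [this]
  exact (measurable_pi_apply n) (measurableSet_singleton v)

lemma mu_rec (hP : IsIndepWalksLaw es (fun _ => 0) P)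
    (hes : ∀ j x, 0 ≤ es j x ∧ es j x ≤ 1) (n : ℕ) (v : Fin d → ℤ) :
    P {F | F (n+1) = v}
      = ∑' w : Fin d → ℤ, P {F | F n = w} * ∏ j, p1 (es j) (w j) (v j) := by
  rw [decomp (measurableSet_eval' (n+1) v) n]
  have hlast : ∀ h : Fin (n+1) → Fin d → ℤ, restr n h n = h (Fin.last n) :=
    fun h => dif_pos (Nat.lt_succ_self n)
  have h1 : ∀ h : Fin (n+1) → Fin d → ℤ,
      P ({F | F (n+1) = v} ∩ cyl (restr n h) n)
        = (∏ j, p1 (es j) (h (Fin.last n) j) (v j)) * P (cyl (restr n h) n) := by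
    intro h
    rw [Set.inter_comm, ← hlast h]
    exact cyl_step es hP hes _ n v
  rw [tsum_congr h1]
  set φ : (Fin (n+1) → Fin d → ℤ) → (Fin d → ℤ) := fun h => h (Fin.last n) with hφ
  rw [← (Equiv.sigmaFiberEquiv φ).tsum_eq
    (fun h => (∏ j, p1 (es j) (φ h j) (v j)) * P (cyl (restr n h) n)),
    ENNReal.tsum_sigma']
  refine tsum_congr fun w => ?_
  calc ∑' (h : {h // φ h = w}),
        (∏ j, p1 (es j) (φ h.1 j) (v j)) * P (cyl (restr n h.1) n)
      = ∑' (h : {h // φ h = w}),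
        (∏ j, p1 (es j) (w j) (v j)) * P (cyl (restr n h.1) n) := by
        refine tsum_congr fun h => ?_
        rw [h.2]
    _ = (∏ j, p1 (es j) (w j) (v j))
        * ∑' (h : {h // φ h = w}), P (cyl (restr n h.1) n) := ENNReal.tsum_mul_left
    _ = P {F | F n = w} * ∏ j, p1 (es j) (w j) (v j) := by
        rw [fiber_sum n w, mul_comm]

lemma mu_zero (hP : IsIndepWalksLaw es (fun _ => 0) P) (v : Fin d → ℤ) :
    P {F | F 0 = v} = if v = (fun _ => (0:ℤ)) then 1 else 0 := by
  have hprob : IsProbabilityMeasure P := hP.1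
  split_ifs with hv
  · subst hv; exact hP.2.1
  · refine measure_mono_null (fun F hF => ?_)
      ((prob_compl_eq_zero_iff (measurableSet_eval' 0 (fun _ => 0))).mpr hP.2.1)
    intro hF0
    exact hv ((hF : F 0 = v) ▸ (hF0 : F 0 = fun _ => 0))

lemma tsum_two_point (f : ℤ → ℝ≥0∞) (e : ℤ → ℝ) (y : ℤ) :
    ∑' x : ℤ, f x * p1 e x y = f (y-1) * p1 e (y-1) y + f (y+1) * p1 e (y+1) y := by
  rw [tsum_eq_sum (s := {y-1, y+1}) (fun x hx => ?_), Finset.sum_pair (by omega)]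
  have h1 : y ≠ x + 1 := by
    intro h; exact hx (by simp [Finset.mem_insert]; omega)
  have h2 : y ≠ x - 1 := by
    intro h; exact hx (by simp [Finset.mem_insert]; omega)
  rw [p1_eq_zero _ h1 h2, mul_zero]

lemma tsum_pi : ∀ (k : ℕ) (f : Fin k → ℤ → ℝ≥0∞),
    ∑' v : Fin k → ℤ, ∏ j, f j (v j) = ∏ j, ∑' x : ℤ, f j x := by
  intro k
  induction k with
  | zero =>
      intro f
      rw [tsum_eq_single (fun i => i.elim0) (fun b hb => absurd (funext fun i => i.elim0) hb.symm)]
      simp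
  | succ k ih =>
      intro f
      rw [← (Fin.consEquiv (fun _ : Fin (k+1) => ℤ)).tsum_eq
        (fun v => ∏ j, f j (v j)), ENNReal.tsum_prod']
      have : ∀ (x : ℤ) (v : Fin k → ℤ),
          (∏ j, f j ((Fin.consEquiv (fun _ : Fin (k+1) => ℤ)) (x, v) j))
            = f 0 x * ∏ j : Fin k, f j.succ (v j) := by
        intro x v
        simp only [Fin.consEquiv_apply, Fin.prod_univ_succ, Fin.cons_zero, Fin.cons_succ]
      calc ∑' (x : ℤ) (v : Fin k → ℤ),
            ∏ j, f j ((Fin.consEquiv (fun _ : Fin (k+1) => ℤ)) (x, v) j)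
          = ∑' (x : ℤ) (v : Fin k → ℤ), f 0 x * ∏ j : Fin k, f j.succ (v j) := by
            exact tsum_congr fun x => tsum_congr fun v => this x v
        _ = ∑' (x : ℤ), f 0 x * ∑' (v : Fin k → ℤ), ∏ j : Fin k, f j.succ (v j) := by
            exact tsum_congr fun x => ENNReal.tsum_mul_left
        _ = (∑' x : ℤ, f 0 x) * ∑' (v : Fin k → ℤ), ∏ j : Fin k, f j.succ (v j) :=
            ENNReal.tsum_mul_right
        _ = ∏ j, ∑' x : ℤ, f j x := by
            rw [ih (fun j => f j.succ), Fin.prod_univ_succ]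

lemma mu_prod (hP : IsIndepWalksLaw es (fun _ => 0) P)
    (hes : ∀ j x, 0 ≤ es j x ∧ es j x ≤ 1) :
    ∀ (n : ℕ) (v : Fin d → ℤ), P {F | F n = v} = ∏ j, nu (es j) n (v j) := by
  intro n
  induction n with
  | zero =>
      intro v
      rw [mu_zero hP v]
      show _ = ∏ j, (if v j = 0 then (1:ℝ≥0∞) else 0)
      split_ifs with hv
      · rw [Finset.prod_eq_one fun j _ => by rw [if_pos (congrFun hv j)]]
      · have : ∃ j, v j ≠ 0 := by
          by_contra hc
          push_neg at hc
          exact hv (funext hc)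
        obtain ⟨j0, hj0⟩ := this
        rw [Finset.prod_eq_zero (Finset.mem_univ j0) (by rw [if_neg hj0])]
  | succ n ih =>
      intro v
      rw [mu_rec hP hes n v, tsum_congr (fun w => by
        rw [ih w, ← Finset.prod_mul_distrib]),
        tsum_pi d (fun j x => nu (es j) n x * p1 (es j) x (v j))]
      refine Finset.prod_congr rfl fun j _ => ?_
      rw [tsum_two_point]
      rfl


lemma event_tsum (n : ℕ) (A : Set (Fin d → ℤ)) [DecidablePred (· ∈ A)] :
    P {F | F n ∈ A} = ∑' v : Fin d → ℤ, (if v ∈ A then P {F | F n = v} else 0) := by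
  set S : (Fin d → ℤ) → Set (ℕ → Fin d → ℤ) :=
    fun v => if v ∈ A then {F | F n = v} else ∅ with hS
  have hmeas : ∀ v, MeasurableSet (S v) := fun v => by
    by_cases h : v ∈ A
    · have e : S v = {F | F n = v} := if_pos h
      rw [e]; exact measurableSet_eval' n v
    · have e : S v = ∅ := if_neg h
      rw [e]; exact MeasurableSet.empty
  have hdisj : Pairwise (Function.onFun Disjoint S) := by
    intro a b hab
    refine Set.disjoint_left.mpr fun F hFa hFb => ?_
    simp only [hS] at hFa hFb
    by_cases ha : a ∈ A
    · by_cases hb : b ∈ A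
      · rw [if_pos ha] at hFa
        rw [if_pos hb] at hFb
        exact hab ((hFa : F n = a).symm.trans (hFb : F n = b))
      · rw [if_neg hb] at hFb; exact hFb
    · rw [if_neg ha] at hFa; exact hFa
  have hU : ⋃ v, S v = {F | F n ∈ A} := by
    ext F
    simp only [Set.mem_iUnion]
    constructor
    · rintro ⟨v, hv⟩
      simp only [hS] at hv
      by_cases h : v ∈ A
      · rw [if_pos h] at hv
        show F n ∈ A
        rw [(hv : F n = v)]
        exact h
      · rw [if_neg h] at hv
        exact absurd hv (Set.notMem_empty F)
    · intro hF
      refine ⟨F n, ?_⟩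
      simp only [hS]
      rw [if_pos (show F n ∈ A from hF)]
      exact rfl
  rw [← hU, measure_iUnion hdisj hmeas]
  refine tsum_congr fun v => ?_
  by_cases h : v ∈ A <;> simp [hS, h]

lemma key_bound (hP : IsIndepWalksLaw es (fun _ => 0) P)
    (hes : ∀ j x, 0 ≤ es j x ∧ es j x ≤ 1)
    (j0 j1 j2 j3 : Fin d)
    (hdist : j0 ≠ j1 ∧ j0 ≠ j2 ∧ j0 ≠ j3 ∧ j1 ≠ j2 ∧ j1 ≠ j3 ∧ j2 ≠ j3) (n : ℕ) :
    P {F | F n j0 = F n j1 ∧ F n j1 = F n j2 ∧ F n j2 = F n j3}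
      ≤ ∑' y : ℤ, nu (es j0) n y * nu (es j1) n y * nu (es j2) n y * nu (es j3) n y := by
  classical
  set A : ℤ → Set (Fin d → ℤ) :=
    fun y => {v | v j0 = y ∧ v j1 = y ∧ v j2 = y ∧ v j3 = y} with hA
  -- decompose over the common value y
  have hE : {F : ℕ → Fin d → ℤ | F n j0 = F n j1 ∧ F n j1 = F n j2 ∧ F n j2 = F n j3}
      = ⋃ y : ℤ, {F | F n ∈ A y} := by
    ext F
    simp only [Set.mem_iUnion, Set.mem_setOf_eq, hA]
    constructor
    · rintro ⟨h1, h2, h3⟩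
      exact ⟨F n j0, rfl, h1.symm, (h1.trans h2).symm, (h1.trans (h2.trans h3)).symm⟩
    · rintro ⟨y, hy0, hy1, hy2, hy3⟩
      exact ⟨hy0.trans hy1.symm, hy1.trans hy2.symm, hy2.trans hy3.symm⟩
  have hdisjy : Pairwise (Function.onFun Disjoint
      (fun y : ℤ => {F : ℕ → Fin d → ℤ | F n ∈ A y})) := by
    intro a b hab
    refine Set.disjoint_left.mpr fun F hFa hFb => hab ?_
    exact (hFa.1).symm.trans (hFb.1)
  rw [hE, measure_iUnion hdisjy (fun y => measurableSet_eval n (A y))]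
  refine ENNReal.tsum_le_tsum fun y => ?_
  -- now bound P {F | F n ∈ A y}
  set g : Fin d → ℤ → ℝ≥0∞ := fun j x =>
    if j = j0 ∨ j = j1 ∨ j = j2 ∨ j = j3 then (if x = y then nu (es j) n x else 0)
    else nu (es j) n x with hg
  have hval : P {F | F n ∈ A y} = ∏ j, ∑' x : ℤ, g j x := by
    rw [event_tsum n (A y), ← tsum_pi d g]
    refine tsum_congr fun v => ?_
    by_cases hv : v ∈ A y
    · rw [if_pos hv, mu_prod hP hes n v]
      refine Finset.prod_congr rfl fun j _ => ?_
      by_cases hj : j = j0 ∨ j = j1 ∨ j = j2 ∨ j = j3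
      · have hvj : v j = y := by
          rcases hj with rfl | rfl | rfl | rfl
          exacts [hv.1, hv.2.1, hv.2.2.1, hv.2.2.2]
        have e1 : g j (v j) = if v j = y then nu (es j) n (v j) else 0 := if_pos hj
        rw [e1, if_pos hvj]
      · exact (if_neg hj).symm
    · rw [if_neg hv]
      have : ∃ j, (j = j0 ∨ j = j1 ∨ j = j2 ∨ j = j3) ∧ v j ≠ y := by
        by_contra hc
        push_neg at hc
        exact hv ⟨hc j0 (Or.inl rfl), hc j1 (Or.inr (Or.inl rfl)),
          hc j2 (Or.inr (Or.inr (Or.inl rfl))), hc j3 (Or.inr (Or.inr (Or.inr rfl)))⟩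
      obtain ⟨j, hj, hvj⟩ := this
      symm
      refine Finset.prod_eq_zero (Finset.mem_univ j) ?_
      have e1 : g j (v j) = if v j = y then nu (es j) n (v j) else 0 := if_pos hj
      rw [e1, if_neg hvj]
  have htj : ∀ i ∈ ({j0, j1, j2, j3} : Finset (Fin d)),
      ∑' x : ℤ, g i x = nu (es i) n y := by
    intro i hi
    have hi' : i = j0 ∨ i = j1 ∨ i = j2 ∨ i = j3 := by
      simpa [Finset.mem_insert] using hi
    have : ∀ x : ℤ, g i x = if x = y then nu (es i) n x else 0 := fun x => if_pos hi'
    rw [tsum_congr this, tsum_eq_single y (fun b hb => by rw [if_neg hb])]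
    rw [if_pos rfl]
  have hle1 : ∀ j, ∑' x : ℤ, g j x ≤ 1 := by
    intro j
    by_cases hj : j = j0 ∨ j = j1 ∨ j = j2 ∨ j = j3
    · have e : ∀ x : ℤ, g j x = if x = y then nu (es j) n x else 0 := fun x => if_pos hj
      rw [tsum_congr e]
      calc ∑' x : ℤ, (if x = y then nu (es j) n x else 0)
          ≤ ∑' x : ℤ, nu (es j) n x := ENNReal.tsum_le_tsum fun x => by
            split_ifs <;> simp
        _ ≤ 1 := tsum_nu_le_one (es j) (hes j) n
    · have e : ∀ x : ℤ, g j x = nu (es j) n x := fun x => if_neg hj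
      rw [tsum_congr e]
      exact tsum_nu_le_one (es j) (hes j) n
  rw [hval]
  obtain ⟨h01, h02, h03, h12, h13, h23⟩ := hdist
  have hsub : ({j0, j1, j2, j3} : Finset (Fin d)) ⊆ Finset.univ := Finset.subset_univ _
  calc ∏ j, ∑' x : ℤ, g j x
      = (∏ j ∈ Finset.univ \ {j0, j1, j2, j3}, ∑' x : ℤ, g j x)
        * ∏ j ∈ ({j0, j1, j2, j3} : Finset (Fin d)), ∑' x : ℤ, g j x := by
        rw [Finset.prod_sdiff hsub]
    _ ≤ 1 * ∏ j ∈ ({j0, j1, j2, j3} : Finset (Fin d)), ∑' x : ℤ, g j x := by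
        gcongr
        exact Finset.prod_le_one' fun i _ => hle1 i
    _ = ∏ j ∈ ({j0, j1, j2, j3} : Finset (Fin d)), ∑' x : ℤ, g j x := one_mul _
    _ = nu (es j0) n y * nu (es j1) n y * nu (es j2) n y * nu (es j3) n y := by
        rw [Finset.prod_insert (by simp [h01, h02, h03]),
          Finset.prod_insert (by simp [h12, h13]),
          Finset.prod_insert (by simp [h23]),
          Finset.prod_singleton, htj j0 (by simp), htj j1 (by simp), htj j2 (by simp),
          htj j3 (by simp)]
        ring


lemma final_zero (hP : IsIndepWalksLaw es (fun _ => 0) P)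
    (hes : ∀ j x, 0 ≤ es j x ∧ es j x ≤ 1)
    (j0 j1 j2 j3 : Fin d)
    (hdist : j0 ≠ j1 ∧ j0 ≠ j2 ∧ j0 ≠ j3 ∧ j1 ≠ j2 ∧ j1 ≠ j3 ∧ j2 ≠ j3)
    (h0 : es j0 = fun _ => (1:ℝ)/2) (h1 : es j1 = fun _ => (1:ℝ)/2)
    (h2 : es j2 = fun _ => (1:ℝ)/2) :
    P {F | {n : ℕ | F n j0 = F n j1 ∧ F n j1 = F n j2 ∧ F n j2 = F n j3}.Infinite} = 0 := by
  set E : ℕ → Set (ℕ → Fin d → ℤ) :=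
    fun n => {F | F n j0 = F n j1 ∧ F n j1 = F n j2 ∧ F n j2 = F n j3} with hEdef
  have hbound : ∀ n, P (E n) ≤ Mn n ^ 3 := by
    intro n
    refine (key_bound hP hes j0 j1 j2 j3 hdist n).trans ?_
    calc ∑' y : ℤ, nu (es j0) n y * nu (es j1) n y * nu (es j2) n y * nu (es j3) n y
        ≤ ∑' y : ℤ, Mn n * Mn n * Mn n * nu (es j3) n y := by
          refine ENNReal.tsum_le_tsum fun y => ?_
          gcongr
          · rw [h0]; exact nus_le_mid' n y
          · rw [h1]; exact nus_le_mid' n y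
          · rw [h2]; exact nus_le_mid' n y
      _ = Mn n ^ 3 * ∑' y : ℤ, nu (es j3) n y := by
          rw [ENNReal.tsum_mul_left]; ring_nf
      _ ≤ Mn n ^ 3 * 1 := by
          gcongr
          exact tsum_nu_le_one _ (hes j3) n
      _ = Mn n ^ 3 := mul_one _
  have hsum : ∑' n, P (E n) ≠ ∞ :=
    ne_top_of_le_ne_top tsum_Mn_cubed (ENNReal.tsum_le_tsum hbound)
  have hlim := MeasureTheory.measure_limsup_atTop_eq_zero hsum
  refine measure_mono_null (fun F hF => ?_) hlim
  rw [Filter.mem_limsup_iff_frequently_mem]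
  exact Nat.frequently_atTop_iff_infinite.mpr hF

end SRWMeetAux

/-- **Theorem 1.2 (i)**. If `m ≥ 3` and `r ≥ 1`, then for almost every environment, the
three simple random walks `S⁽¹⁾, S⁽²⁾, S⁽³⁾` and the RWRE `Z⁽¹⁾` meet simultaneously only a
finite number of times, almost surely. -/
theorem finitely_many_meetings_three_srw_one_rwre
    {Ω : Type*} [MeasurableSpace Ω] (Pbar : Measure Ω) [IsProbabilityMeasure Pbar]
    (m r I : ℕ) (hd : 1 ≤ m + r) (hIr : I ≤ r) (hI1 : 1 ≤ r → 1 ≤ I)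
    (ε₀ : ℝ) (hε₀ : ε₀ ∈ Set.Ioo (0 : ℝ) (1 / 2))
    (env : Fin r → ℤ → Ω → ℝ)
    (henv : ∀ j x a, env j x a ∈ Set.Ioo (0 : ℝ) 1)
    (hmeas : ∀ j x, Measurable (env j x))
    -- each environment is an i.i.d. collection:
    (hiid : ∀ j, iIndepFun (fun x => env j x) Pbar)
    (hident : ∀ j x, IdentDistrib (env j x) (env j 0) Pbar Pbar)
    -- the first `I` environments are independent:
    (hindepI : iIndepFun
      (fun (i : Fin I) (a : Ω) (x : ℤ) => env (Fin.castLE hIr i) x a) Pbar)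
    -- every environment is a copy of one of the first `I`:
    (hdup : ∀ j : Fin r, ∃ i : Fin r, (i : ℕ) < I ∧ env j = env i)
    -- ellipticity and recurrence assumptions:
    (hsupp : ∀ j, Pbar {a | env j 0 a ∈ Set.Icc ε₀ (1 - ε₀)} = 1)
    (hmean : ∀ j, ∫ a, Real.log ((1 - env j 0 a) / env j 0 a) ∂Pbar = 0)
    (hvar : ∀ j, 0 < ∫ a, (Real.log ((1 - env j 0 a) / env j 0 a)) ^ 2 ∂Pbar)
    -- quenched joint law of the `m` SRW and the `r` RWRE, all started at `0`:
    (PY : Ω → Measure (ℕ → Fin (m + r) → ℤ))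
    (hPY : ∀ a, IsIndepWalksLaw
      (fun i : Fin (m + r) =>
        if h : (i : ℕ) < m then (fun _ : ℤ => (1 : ℝ) / 2)
        else (fun x : ℤ => env ⟨(i : ℕ) - m, by have := i.isLt; omega⟩ x a))
      (fun _ => 0) (PY a))
    (hm : 3 ≤ m) (hr : 1 ≤ r) :
    ∀ᵐ a ∂Pbar, PY a
      {F | {n : ℕ |
        F n ⟨0, by omega⟩ = F n ⟨1, by omega⟩ ∧
        F n ⟨1, by omega⟩ = F n ⟨2, by omega⟩ ∧
        F n ⟨2, by omega⟩ = F n ⟨m, by omega⟩}.Infinite} = 0 := by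
  refine MeasureTheory.ae_of_all _ fun a => ?_
  set es : Fin (m+r) → ℤ → ℝ := fun i : Fin (m + r) =>
    if h : (i : ℕ) < m then (fun _ : ℤ => (1 : ℝ) / 2)
    else (fun x : ℤ => env ⟨(i : ℕ) - m, by have := i.isLt; omega⟩ x a) with hes_def
  have hP : IsIndepWalksLaw es (fun _ => 0) (PY a) := hPY a
  have hes : ∀ j x, 0 ≤ es j x ∧ es j x ≤ 1 := by
    intro j x
    by_cases h : (j:ℕ) < m
    · have e : es j = fun _ : ℤ => (1:ℝ)/2 := dif_pos h
      rw [e]; norm_num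
    · have e : es j = fun x : ℤ => env ⟨(j:ℕ) - m, by have := j.isLt; omega⟩ x a := dif_neg h
      rw [e]
      have := henv ⟨(j:ℕ) - m, by have := j.isLt; omega⟩ x a
      exact ⟨this.1.le, this.2.le⟩
  have hdist : (⟨0, by omega⟩ : Fin (m+r)) ≠ ⟨1, by omega⟩ ∧
      (⟨0, by omega⟩ : Fin (m+r)) ≠ ⟨2, by omega⟩ ∧
      (⟨0, by omega⟩ : Fin (m+r)) ≠ ⟨m, by omega⟩ ∧
      (⟨1, by omega⟩ : Fin (m+r)) ≠ ⟨2, by omega⟩ ∧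
      (⟨1, by omega⟩ : Fin (m+r)) ≠ ⟨m, by omega⟩ ∧
      (⟨2, by omega⟩ : Fin (m+r)) ≠ ⟨m, by omega⟩ := by
    refine ⟨?_, ?_, ?_, ?_, ?_, ?_⟩ <;> (intro h; rw [Fin.mk.injEq] at h; omega)
  have h0 : es ⟨0, by omega⟩ = fun _ => (1:ℝ)/2 := dif_pos (show (0:ℕ) < m by omega)
  have h1 : es ⟨1, by omega⟩ = fun _ => (1:ℝ)/2 := dif_pos (show (1:ℕ) < m by omega)
  have h2 : es ⟨2, by omega⟩ = fun _ => (1:ℝ)/2 := dif_pos (show (2:ℕ) < m by omega)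
  exact SRWMeetAux.final_zero hP hes ⟨0, by omega⟩ ⟨1, by omega⟩ ⟨2, by omega⟩ ⟨m, by omega⟩
    hdist h0 h1 h2
end
end

section
/- Let (Z_n)_{n≥0} be a time-homogeneous Markov chain on a countable state space, let a ≠ b be two states, and let P^b denote the law of the chain started at b. Then for every k ∈ ℕ: P^b[τ(a) = k] ≤ P^b[τ(a) < τ(b)], where τ(x) := inf{ n ≥ 1 : Z_n = x }. -/
open MeasureTheory ProbabilityTheory Filter Set
open scoped ENNReal NNReal

noncomputable section

namespace HitBoundAux

open scoped Classical

variable {X : Type*} [MeasurableSpace X] [MeasurableSingletonClass X] [Countable X]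

/-- Cylinder set: paths agreeing with `w` up to time `n`. -/
def cyl (w : ℕ → X) (n : ℕ) : Set (ℕ → X) := {f | ∀ i ≤ n, f i = w i}

lemma mem_cyl {w f : ℕ → X} {n : ℕ} : f ∈ cyl w n ↔ ∀ i ≤ n, f i = w i := Iff.rfl

lemma cyl_measurable (w : ℕ → X) (n : ℕ) : MeasurableSet (cyl w n) := by
  have h : cyl w n = ⋂ i ∈ Set.Iic n, (fun f : ℕ → X => f i) ⁻¹' {w i} := by
    ext f; simp [cyl]
  rw [h]
  exact MeasurableSet.biInter (Set.to_countable _)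
    fun i _ => (measurable_pi_apply i) (measurableSet_singleton _)

lemma cyl_meas (P : X → Measure (ℕ → X)) (κ : X → Measure X)
    (hprob : ∀ x, IsProbabilityMeasure (P x))
    (hstart : ∀ x, P x {f | f 0 = x} = 1)
    (hmarkov : ∀ (x : X) (n : ℕ) (g : ℕ → X) (z : X),
      P x {f | (∀ i ≤ n, f i = g i) ∧ f (n + 1) = z}
        = κ (g n) {z} * P x {f | ∀ i ≤ n, f i = g i})
    (b : X) (w : ℕ → X) (n : ℕ) :
    P b (cyl w n)
      = (if w 0 = b then 1 else 0) * ∏ i ∈ Finset.range n, κ (w i) {w (i + 1)} := by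
  haveI := hprob b
  induction n with
  | zero =>
      have hset : cyl w 0 = {f : ℕ → X | f 0 = w 0} := by
        ext f; simp [cyl]
      rw [hset]
      by_cases h : w 0 = b
      · rw [if_pos h, h, hstart b]; simp
      · rw [if_neg h]
        have hm : MeasurableSet {f : ℕ → X | f 0 = b} := by
          have he : {f : ℕ → X | f 0 = b} = (fun f : ℕ → X => f 0) ⁻¹' {b} := by
            ext f; simp
          rw [he]
          exact (measurable_pi_apply 0) (measurableSet_singleton b)
        have hc : P b ({f : ℕ → X | f 0 = b}ᶜ) = 0 := by
          rw [measure_compl hm (measure_ne_top _ _), measure_univ, hstart b, tsub_self]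
        have hsub : {f : ℕ → X | f 0 = w 0} ⊆ {f : ℕ → X | f 0 = b}ᶜ := by
          intro f hf hf'
          exact h (by rw [← hf]; exact hf')
        simp [measure_mono_null hsub hc]
  | succ n ih =>
      have hset : cyl w (n + 1)
          = {f : ℕ → X | (∀ i ≤ n, f i = w i) ∧ f (n + 1) = w (n + 1)} := by
        ext f
        constructor
        · intro hf
          exact ⟨fun i hi => hf i (by omega), hf (n + 1) le_rfl⟩
        · rintro ⟨h1, h2⟩ i hi
          rcases Nat.lt_or_ge i (n + 1) with h | h
          · exact h1 i (by omega)
          · have hi' : i = n + 1 := by omega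
            rw [hi']; exact h2
      rw [hset, hmarkov b n w (w (n + 1))]
      have hcyl : {f : ℕ → X | ∀ i ≤ n, f i = w i} = cyl w n := rfl
      rw [hcyl, ih, Finset.prod_range_succ]
      ring

/-- The index of the last visit to `b` strictly before time `k`. -/
def Lfun (b : X) (k : ℕ) (w : ℕ → X) : ℕ := Nat.findGreatest (fun i => w i = b) (k - 1)

/-- Word shifted at the last visit to `b`, with tail pinned to `a`. -/
def shiftw (a b : X) (k : ℕ) (w : ℕ → X) : ℕ × (ℕ → X) :=
  (k - Lfun b k w, fun i => if i ≤ k - Lfun b k w then w (Lfun b k w + i) else a)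

/-- Words encoding `τ(a) = k` with first coordinate `b` and tail pinned to `a`. -/
def Gset (a b : X) (k : ℕ) : Set (ℕ → X) :=
  {w | w 0 = b ∧ w k = a ∧ (∀ i, 1 ≤ i → i < k → w i ≠ a) ∧ ∀ i, k < i → w i = a}

/-- Pairs `(m, h)` encoding paths hitting `a` at time `m` avoiding `b`, tail pinned to `a`. -/
def Hset (a b : X) : Set (ℕ × (ℕ → X)) :=
  {p | 1 ≤ p.1 ∧ p.2 0 = b ∧ p.2 p.1 = a ∧ (∀ i, 1 ≤ i → i < p.1 → p.2 i ≠ a) ∧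
    (∀ i, 1 ≤ i → i ≤ p.1 → p.2 i ≠ b) ∧ ∀ i, p.1 < i → p.2 i = a}

lemma Lfun_lt {b : X} {k : ℕ} (hk : 1 ≤ k) (w : ℕ → X) : Lfun b k w < k := by
  have := Nat.findGreatest_le (P := fun i => w i = b) (k - 1)
  have h2 : Lfun b k w ≤ k - 1 := this
  omega

lemma Lfun_spec {a b : X} {k : ℕ} {w : ℕ → X} (hw : w ∈ Gset a b k) :
    w (Lfun b k w) = b :=
  Nat.findGreatest_spec (P := fun i => w i = b) (Nat.zero_le _) hw.1

lemma Lfun_max {b : X} {k : ℕ} {w : ℕ → X} {j : ℕ} (h1 : Lfun b k w < j) (h2 : j < k) :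
    w j ≠ b :=
  Nat.findGreatest_is_greatest (P := fun i => w i = b) h1 (by omega)

lemma shiftw_mem {a b : X} (hab : a ≠ b) {k : ℕ} (hk : 1 ≤ k) {w : ℕ → X}
    (hw : w ∈ Gset a b k) : shiftw a b k w ∈ Hset a b := by
  obtain ⟨h0, hka, hna, htail⟩ := hw
  have hL : Lfun b k w < k := Lfun_lt hk w
  have hLb : w (Lfun b k w) = b :=
    Nat.findGreatest_spec (P := fun i => w i = b) (Nat.zero_le _) h0
  refine ⟨by simp only [shiftw]; omega, ?_, ?_, ?_, ?_, ?_⟩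
  · show (if 0 ≤ k - Lfun b k w then w (Lfun b k w + 0) else a) = b
    rw [if_pos (Nat.zero_le _)]
    simpa using hLb
  · show (if k - Lfun b k w ≤ k - Lfun b k w then w (Lfun b k w + (k - Lfun b k w)) else a) = a
    rw [if_pos le_rfl, show Lfun b k w + (k - Lfun b k w) = k by omega]
    exact hka
  · intro i hi hik
    simp only [shiftw] at hik
    show (if i ≤ k - Lfun b k w then w (Lfun b k w + i) else a) ≠ a
    rw [if_pos (by omega)]
    exact hna (Lfun b k w + i) (by omega) (by omega)
  · intro i hi hik
    simp only [shiftw] at hik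
    show (if i ≤ k - Lfun b k w then w (Lfun b k w + i) else a) ≠ b
    rw [if_pos hik]
    rcases Nat.lt_or_ge (Lfun b k w + i) k with h | h
    · exact Lfun_max (by omega) h
    · have he : Lfun b k w + i = k := by omega
      rw [he, hka]
      exact hab
  · intro i hik
    simp only [shiftw] at hik
    show (if i ≤ k - Lfun b k w then w (Lfun b k w + i) else a) = a
    rw [if_neg (by omega)]

lemma split_meas (P : X → Measure (ℕ → X)) (κ : X → Measure X)
    (hprob : ∀ x, IsProbabilityMeasure (P x))
    (hstart : ∀ x, P x {f | f 0 = x} = 1)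
    (hmarkov : ∀ (x : X) (n : ℕ) (g : ℕ → X) (z : X),
      P x {f | (∀ i ≤ n, f i = g i) ∧ f (n + 1) = z}
        = κ (g n) {z} * P x {f | ∀ i ≤ n, f i = g i})
    (a b : X) (k : ℕ) (hk : 1 ≤ k) {w : ℕ → X} (hw : w ∈ Gset a b k) :
    P b (cyl w k)
      = P b (cyl w (Lfun b k w)) * P b (cyl (shiftw a b k w).2 (shiftw a b k w).1) := by
  have hL : Lfun b k w < k := Lfun_lt hk w
  have hLb : w (Lfun b k w) = b := Lfun_spec hw
  rw [cyl_meas P κ hprob hstart hmarkov b w k,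
      cyl_meas P κ hprob hstart hmarkov b w (Lfun b k w),
      cyl_meas P κ hprob hstart hmarkov b (shiftw a b k w).2 (shiftw a b k w).1]
  have h2 : (shiftw a b k w).2 0 = b := by
    show (if 0 ≤ k - Lfun b k w then w (Lfun b k w + 0) else a) = b
    rw [if_pos (Nat.zero_le _)]
    simpa using hLb
  rw [if_pos hw.1, if_pos h2, one_mul, one_mul, one_mul]
  have hprod : ∏ i ∈ Finset.range ((shiftw a b k w).1),
      κ ((shiftw a b k w).2 i) {(shiftw a b k w).2 (i + 1)}
      = ∏ i ∈ Finset.range (k - Lfun b k w),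
          κ (w (Lfun b k w + i)) {w (Lfun b k w + i + 1)} := by
    apply Finset.prod_congr
    · rfl
    · intro i hi
      simp only [Finset.mem_range] at hi
      have hi' : i < k - Lfun b k w := hi
      show κ (if i ≤ k - Lfun b k w then w (Lfun b k w + i) else a)
          {if i + 1 ≤ k - Lfun b k w then w (Lfun b k w + (i + 1)) else a} = _
      rw [if_pos (by omega : i ≤ k - Lfun b k w),
        if_pos (by omega : i + 1 ≤ k - Lfun b k w)]
      rfl
  rw [hprod]
  have hpr := Finset.prod_range_add (fun i => κ (w i) {w (i + 1)}) (Lfun b k w)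
    (k - Lfun b k w)
  rw [show Lfun b k w + (k - Lfun b k w) = k by omega] at hpr
  exact hpr

lemma Gset_countable (a b : X) (k : ℕ) : (Gset a b k).Countable := by
  have hinj : Function.Injective
      (fun w : ↥(Gset a b k) => (fun i : Fin (k + 1) => (w : ℕ → X) i)) := by
    rintro ⟨w, hw⟩ ⟨v, hv⟩ h
    apply Subtype.ext
    funext i
    show w i = v i
    rcases le_or_gt i k with hik | hik
    · exact congrFun h ⟨i, by omega⟩
    · exact (hw.2.2.2 i hik).trans (hv.2.2.2 i hik).symm
  haveI : Countable ↥(Gset a b k) := hinj.countable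
  exact Set.countable_coe_iff.mp this

lemma Hset_countable (a b : X) : (Hset a b).Countable := by
  have hinj : Function.Injective
      (fun p : ↥(Hset a b) =>
        (⟨(p : ℕ × (ℕ → X)).1, fun i : Fin ((p : ℕ × (ℕ → X)).1 + 1) =>
          (p : ℕ × (ℕ → X)).2 i⟩ : Σ n : ℕ, (Fin (n + 1) → X))) := by
    rintro ⟨⟨m, w⟩, hp⟩ ⟨⟨m', w'⟩, hq⟩ h
    simp only [Sigma.mk.inj_iff] at h
    obtain ⟨h1, h2⟩ := h
    subst h1
    rw [heq_iff_eq] at h2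
    apply Subtype.ext
    have hw : w = w' := by
      funext i
      rcases le_or_gt i m with him | him
      · exact congrFun h2 ⟨i, by omega⟩
      · exact (hp.2.2.2.2.2 i him).trans (hq.2.2.2.2.2 i him).symm
    exact congrArg (Prod.mk m) hw
  haveI : Countable ↥(Hset a b) := hinj.countable
  exact Set.countable_coe_iff.mp this

lemma Gset_disjoint (a b : X) (k : ℕ) :
    (Gset a b k).PairwiseDisjoint (fun w => cyl w k) := by
  intro w hw v hv hne
  refine Set.disjoint_left.mpr fun f hf hf' => hne ?_
  funext i
  rcases le_or_gt i k with h | h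
  · rw [← hf i h, ← hf' i h]
  · rw [hw.2.2.2 i h, hv.2.2.2 i h]

lemma Hset_disjoint (a b : X) :
    (Hset a b).PairwiseDisjoint (fun p => cyl p.2 p.1) := by
  intro p hp q hq hne
  refine Set.disjoint_left.mpr fun f hf hf' => hne ?_
  have hfst : p.1 = q.1 := by
    by_contra hne'
    rcases Nat.lt_or_ge p.1 q.1 with h | h
    · have hqa : q.2 p.1 = a :=
        (hf' p.1 h.le).symm.trans ((hf p.1 le_rfl).trans hp.2.2.1)
      exact hq.2.2.2.1 p.1 hp.1 h hqa
    · have h' : q.1 < p.1 := by omega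
      have hpa : p.2 q.1 = a :=
        (hf q.1 h'.le).symm.trans ((hf' q.1 le_rfl).trans hq.2.2.1)
      exact hp.2.2.2.1 q.1 hq.1 h' hpa
  have hsnd : p.2 = q.2 := by
    funext i
    rcases le_or_gt i p.1 with h | h
    · rw [← hf i h, hf' i (by omega)]
    · rw [hp.2.2.2.2.2 i h, hq.2.2.2.2.2 i (by omega)]
  exact Prod.ext hfst hsnd

end HitBoundAux

open HitBoundAux

/-- **Lemma 4.6**. For any time-homogeneous Markov chain on a countable state space
(characterized by its transition kernel `κ` on cylinder events) started at `b`, and any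
state `a ≠ b`: for every `k`, `P^b[τ(a) = k] ≤ P^b[τ(a) < τ(b)]`, where
`τ(x) = inf{n ≥ 1 : Z_n = x}`. -/
theorem hitting_time_pointwise_bound
    {X : Type*} [MeasurableSpace X] [MeasurableSingletonClass X] [Countable X]
    (P : X → Measure (ℕ → X)) (κ : X → Measure X)
    (hκ : ∀ x, IsProbabilityMeasure (κ x))
    (hprob : ∀ x, IsProbabilityMeasure (P x))
    (hstart : ∀ x, P x {f | f 0 = x} = 1)
    (hmarkov : ∀ (x : X) (n : ℕ) (g : ℕ → X) (z : X),
      P x {f | (∀ i ≤ n, f i = g i) ∧ f (n + 1) = z}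
        = κ (g n) {z} * P x {f | ∀ i ≤ n, f i = g i})
    (a b : X) (hab : a ≠ b) (k : ℕ) :
    P b {f | 1 ≤ k ∧ f k = a ∧ ∀ i, 1 ≤ i → i < k → f i ≠ a}
      ≤ P b {f | ∃ n, 1 ≤ n ∧ f n = a ∧ ∀ i, 1 ≤ i → i ≤ n → f i ≠ b} := by
  classical
  haveI := hprob b
  by_cases hk : 1 ≤ k
  swap
  · have h0 : {f : ℕ → X | 1 ≤ k ∧ f k = a ∧ ∀ i, 1 ≤ i → i < k → f i ≠ a} = ∅ := by
      ext f
      simp only [Set.mem_setOf_eq, Set.mem_empty_iff_false, iff_false, not_and]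
      intro h; exact absurd h hk
    rw [h0, measure_empty]
    exact zero_le
  · have hnull : P b ({f : ℕ → X | f 0 = b}ᶜ) = 0 := by
      have hm : MeasurableSet {f : ℕ → X | f 0 = b} := by
        have he : {f : ℕ → X | f 0 = b} = (fun f : ℕ → X => f 0) ⁻¹' {b} := by
          ext f; simp
        rw [he]
        exact (measurable_pi_apply 0) (measurableSet_singleton b)
      rw [measure_compl hm (measure_ne_top _ _), measure_univ, hstart b, tsub_self]
    haveI hGc : Countable ↥(Gset a b k) := (Gset_countable a b k).to_subtype
    haveI hHc : Countable ↥(Hset a b) := (Hset_countable a b).to_subtype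
    -- Step 1: bound by the sum over the word decomposition.
    have step1 : P b {f : ℕ → X | 1 ≤ k ∧ f k = a ∧ ∀ i, 1 ≤ i → i < k → f i ≠ a}
        ≤ ∑' w : ↥(Gset a b k), P b (cyl (w : ℕ → X) k) := by
      have hsub : {f : ℕ → X | 1 ≤ k ∧ f k = a ∧ ∀ i, 1 ≤ i → i < k → f i ≠ a}
          ⊆ (⋃ w ∈ Gset a b k, cyl w k) ∪ {f : ℕ → X | f 0 = b}ᶜ := by
        intro f hf
        rcases Classical.em (f 0 = b) with h0 | h0
        · left
          have hmem : (fun i => if i ≤ k then f i else a) ∈ Gset a b k := by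
            refine ⟨?_, ?_, ?_, ?_⟩
            · show (if 0 ≤ k then f 0 else a) = b
              rw [if_pos (Nat.zero_le k)]; exact h0
            · show (if k ≤ k then f k else a) = a
              rw [if_pos le_rfl]; exact hf.2.1
            · intro i h1 h2
              show (if i ≤ k then f i else a) ≠ a
              rw [if_pos (le_of_lt h2)]
              exact hf.2.2 i h1 h2
            · intro i hi
              show (if i ≤ k then f i else a) = a
              rw [if_neg (by omega)]
          refine Set.mem_biUnion hmem ?_
          intro i hi
          show f i = (if i ≤ k then f i else a)
          rw [if_pos hi]
        · right; exact h0
      calc P b {f : ℕ → X | 1 ≤ k ∧ f k = a ∧ ∀ i, 1 ≤ i → i < k → f i ≠ a}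
          ≤ P b ((⋃ w ∈ Gset a b k, cyl w k) ∪ {f : ℕ → X | f 0 = b}ᶜ) :=
            measure_mono hsub
        _ ≤ P b (⋃ w ∈ Gset a b k, cyl w k) + P b ({f : ℕ → X | f 0 = b}ᶜ) :=
            measure_union_le _ _
        _ = P b (⋃ w ∈ Gset a b k, cyl w k) := by rw [hnull, add_zero]
        _ = ∑' w : ↥(Gset a b k), P b (cyl (w : ℕ → X) k) :=
            measure_biUnion (Gset_countable a b k) (Gset_disjoint a b k)
              (fun w _ => cyl_measurable w k)
    -- Step 2: regroup by the shifted word.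
    have hσmem : ∀ w : ↥(Gset a b k), shiftw a b k (w : ℕ → X) ∈ Hset a b :=
      fun w => shiftw_mem hab hk w.2
    set σ' : ↥(Gset a b k) → ↥(Hset a b) :=
      fun w => ⟨shiftw a b k (w : ℕ → X), hσmem w⟩ with hσ'def
    have step2 : ∑' w : ↥(Gset a b k), P b (cyl (w : ℕ → X) k)
        ≤ ∑' p : ↥(Hset a b),
            P b (cyl (p : ℕ × (ℕ → X)).2 (p : ℕ × (ℕ → X)).1) := by
      have heq : ∑' w : ↥(Gset a b k), P b (cyl (w : ℕ → X) k)
          = ∑' p : ↥(Hset a b), ∑' w : {w : ↥(Gset a b k) // σ' w = p},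
              P b (cyl ((w : ↥(Gset a b k)) : ℕ → X) k) := by
        rw [← ENNReal.tsum_sigma]
        exact ((Equiv.sigmaFiberEquiv σ').tsum_eq
          (fun w : ↥(Gset a b k) => P b (cyl (w : ℕ → X) k))).symm
      rw [heq]
      apply ENNReal.tsum_le_tsum
      intro p
      -- The fiber over p.
      have hfib : ∀ w : {w : ↥(Gset a b k) // σ' w = p},
          shiftw a b k ((w : ↥(Gset a b k)) : ℕ → X) = (p : ℕ × (ℕ → X)) :=
        fun w => congrArg Subtype.val w.2
      have hLfix : ∀ w : {w : ↥(Gset a b k) // σ' w = p},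
          Lfun b k ((w : ↥(Gset a b k)) : ℕ → X) = k - (p : ℕ × (ℕ → X)).1 := by
        intro w
        have h1 : (shiftw a b k ((w : ↥(Gset a b k)) : ℕ → X)).1
            = (p : ℕ × (ℕ → X)).1 := by rw [hfib w]
        have h2 : k - Lfun b k ((w : ↥(Gset a b k)) : ℕ → X)
            = (p : ℕ × (ℕ → X)).1 := h1
        have h3 := Lfun_lt (b := b) hk ((w : ↥(Gset a b k)) : ℕ → X)
        omega
      set Lp := k - (p : ℕ × (ℕ → X)).1 with hLp
      -- the representation of each fiber element beyond Lp
      have hrep : ∀ w : {w : ↥(Gset a b k) // σ' w = p}, ∀ i, Lp ≤ i → i ≤ k →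
          ((w : ↥(Gset a b k)) : ℕ → X) i = (p : ℕ × (ℕ → X)).2 (i - Lp) := by
        intro w i h1 h2
        have hs := congrFun (congrArg Prod.snd (hfib w)) (i - Lp)
        have hL := hLfix w
        have hcond : i - Lp ≤ k - Lfun b k ((w : ↥(Gset a b k)) : ℕ → X) := by omega
        show _ = _
        rw [← hs]
        show _ = (if i - Lp ≤ k - Lfun b k ((w : ↥(Gset a b k)) : ℕ → X)
          then ((w : ↥(Gset a b k)) : ℕ → X)
            (Lfun b k ((w : ↥(Gset a b k)) : ℕ → X) + (i - Lp)) else a)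
        rw [if_pos hcond, hL, show Lp + (i - Lp) = i by omega]
      -- pairwise disjointness of the prefix cylinders on the fiber
      have hdisj : Pairwise (Function.onFun Disjoint
          (fun w : {w : ↥(Gset a b k) // σ' w = p} =>
            cyl ((w : ↥(Gset a b k)) : ℕ → X) Lp)) := by
        intro w v hne
        refine Set.disjoint_left.mpr fun f hf hf' => hne ?_
        apply Subtype.ext
        apply Subtype.ext
        funext i
        rcases le_or_gt i Lp with h | h
        · rw [← hf i h, hf' i h]
        · rcases le_or_gt i k with h2 | h2
          · rw [hrep w i h.le h2, hrep v i h.le h2]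
          · rw [((w : ↥(Gset a b k)).2).2.2.2 i h2, ((v : ↥(Gset a b k)).2).2.2.2 i h2]
      have hsum1 : ∑' w : {w : ↥(Gset a b k) // σ' w = p},
          P b (cyl ((w : ↥(Gset a b k)) : ℕ → X) Lp) ≤ 1 := by
        rw [← measure_iUnion hdisj (fun w => cyl_measurable _ _)]
        exact prob_le_one
      calc ∑' w : {w : ↥(Gset a b k) // σ' w = p},
            P b (cyl ((w : ↥(Gset a b k)) : ℕ → X) k)
          = ∑' w : {w : ↥(Gset a b k) // σ' w = p},
              P b (cyl ((w : ↥(Gset a b k)) : ℕ → X) Lp)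
                * P b (cyl (p : ℕ × (ℕ → X)).2 (p : ℕ × (ℕ → X)).1) := by
            apply tsum_congr
            intro w
            have hw : ((w : ↥(Gset a b k)) : ℕ → X) ∈ Gset a b k :=
              (w : ↥(Gset a b k)).2
            rw [split_meas P κ hprob hstart hmarkov a b k hk hw, hLfix w, hfib w]
        _ = (∑' w : {w : ↥(Gset a b k) // σ' w = p},
              P b (cyl ((w : ↥(Gset a b k)) : ℕ → X) Lp))
                * P b (cyl (p : ℕ × (ℕ → X)).2 (p : ℕ × (ℕ → X)).1) :=
            ENNReal.tsum_mul_right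
        _ ≤ 1 * P b (cyl (p : ℕ × (ℕ → X)).2 (p : ℕ × (ℕ → X)).1) :=
            mul_le_mul_left hsum1 _
        _ = P b (cyl (p : ℕ × (ℕ → X)).2 (p : ℕ × (ℕ → X)).1) := one_mul _
    -- Step 3: sum over H is bounded by the target probability.
    have step3 : ∑' p : ↥(Hset a b),
        P b (cyl (p : ℕ × (ℕ → X)).2 (p : ℕ × (ℕ → X)).1)
        ≤ P b {f : ℕ → X | ∃ n, 1 ≤ n ∧ f n = a ∧ ∀ i, 1 ≤ i → i ≤ n → f i ≠ b} := by
      have hdisj : Pairwise (Function.onFun Disjoint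
          (fun p : ↥(Hset a b) => cyl (p : ℕ × (ℕ → X)).2 (p : ℕ × (ℕ → X)).1)) := by
        intro p q hne
        exact Hset_disjoint a b p.2 q.2 (fun h => hne (Subtype.ext h))
      rw [← measure_iUnion hdisj (fun p => cyl_measurable _ _)]
      apply measure_mono
      rintro f hf
      obtain ⟨p, hfp⟩ := Set.mem_iUnion.mp hf
      refine ⟨(p : ℕ × (ℕ → X)).1, p.2.1, ?_, ?_⟩
      · rw [hfp (p : ℕ × (ℕ → X)).1 le_rfl]
        exact p.2.2.2.1
      · intro i h1 h2
        rw [hfp i h2]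
        exact p.2.2.2.2.2.1 i h1 h2
    exact step1.trans (step2.trans step3)
end
end
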